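/- Let $Q \subset \mathbb{R}^n$ be a polytope and $\mu$ a Borel probability measure on the space of polytopes with bounded support such that $h_Q = \int h_P\, \mu(dP)$. Then every $P$ in the support of $\mu$ is a scaled summand of $Q$, i.e., there exist $\alpha > 0$ and a polytope $R$ with $Q = \alpha P + R$. -/

import Mathlib

open scoped Pointwise RealInnerProductSpace
open MeasureTheory

noncomputable section

/-- Support function of a convex body. -/
def sfn {n : ℕ} (K : ConvexBody (EuclideanSpace ℝ (Fin n))) (u : EuclideanSpace ℝ (Fin n)) : ℝ :=
  sSup ((fun x => ⟪x, u⟫) '' (K : Set (EuclideanSpace ℝ (Fin n))))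

/-- The support of a measure on a topological space. -/
def msupport {X : Type*} [TopologicalSpace X] [MeasurableSpace X] (μ : Measure X) : Set X :=
  {x | ∀ U : Set X, IsOpen U → x ∈ U → μ U ≠ 0}

/-- A convex body is a polytope if it is the convex hull of a finite set. -/
def IsPolytope {n : ℕ} (P : ConvexBody (EuclideanSpace ℝ (Fin n))) : Prop :=
  ∃ s : Finset (EuclideanSpace ℝ (Fin n)),
    (P : Set (EuclideanSpace ℝ (Fin n))) = convexHull ℝ ↑s

/-- The class of polytopes. -/
def Polytopes (n : ℕ) : Set (ConvexBody (EuclideanSpace ℝ (Fin n))) :=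
  {P | IsPolytope P}

namespace SfnAux

variable {n : ℕ}

local notation "E" => EuclideanSpace ℝ (Fin n)

lemma cont_inner (u : E) : Continuous (fun x : E => ⟪x, u⟫) :=
  Continuous.inner continuous_id continuous_const

lemma sfn_exists (K : ConvexBody E) (u : E) :
    ∃ x ∈ K, (∀ y ∈ K, ⟪y, u⟫ ≤ ⟪x, u⟫) ∧ sfn K u = ⟪x, u⟫ := by
  obtain ⟨x, hxK, hmax⟩ := K.isCompact.exists_isMaxOn K.nonempty ((cont_inner u).continuousOn)
  refine ⟨x, hxK, fun y hy => hmax hy, ?_⟩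
  apply IsGreatest.csSup_eq
  exact ⟨⟨x, hxK, rfl⟩, by rintro r ⟨y, hy, rfl⟩; exact hmax hy⟩

lemma inner_le_sfn {K : ConvexBody E} {x : E} (hx : x ∈ K) (u : E) : ⟪x, u⟫ ≤ sfn K u := by
  obtain ⟨z, hz, hmax, hs⟩ := sfn_exists K u
  rw [hs]; exact hmax x hx

lemma sfn_eq_of_isMaxOn {K : ConvexBody E} {x : E} (hx : x ∈ K) {u : E}
    (h : ∀ y ∈ K, ⟪y, u⟫ ≤ ⟪x, u⟫) : sfn K u = ⟪x, u⟫ :=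
  le_antisymm (by obtain ⟨z, hz, _, hs⟩ := sfn_exists K u; rw [hs]; exact h z hz)
    (inner_le_sfn hx u)

lemma sfn_add (K L : ConvexBody E) (u : E) : sfn (K + L) u = sfn K u + sfn L u := by
  obtain ⟨x, hx, hmx, hsx⟩ := sfn_exists K u
  obtain ⟨y, hy, hmy, hsy⟩ := sfn_exists L u
  have hmem : x + y ∈ K + L := by
    rw [← SetLike.mem_coe, ConvexBody.coe_add]; exact Set.add_mem_add hx hy
  rw [hsx, hsy, ← inner_add_left]
  apply sfn_eq_of_isMaxOn hmem
  intro z hz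
  rw [← SetLike.mem_coe, ConvexBody.coe_add] at hz
  obtain ⟨p, hp, q, hq, rfl⟩ := hz
  rw [inner_add_left, inner_add_left]
  exact add_le_add (hmx p hp) (hmy q hq)

lemma sfn_smul (K : ConvexBody E) {a : ℝ} (ha : 0 ≤ a) (u : E) : sfn (a • K) u = a * sfn K u := by
  obtain ⟨x, hx, hmx, hsx⟩ := sfn_exists K u
  have hmem : a • x ∈ a • K := by
    rw [← SetLike.mem_coe, ConvexBody.coe_smul]; exact Set.smul_mem_smul_set hx
  rw [hsx, ← real_inner_smul_left]
  apply sfn_eq_of_isMaxOn hmem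
  intro z hz
  rw [← SetLike.mem_coe, ConvexBody.coe_smul] at hz
  obtain ⟨p, hp, rfl⟩ := hz
  rw [real_inner_smul_left, real_inner_smul_left]
  exact mul_le_mul_of_nonneg_left (hmx p hp) ha

lemma sfn_subadd (K : ConvexBody E) (u v : E) : sfn K (u + v) ≤ sfn K u + sfn K v := by
  obtain ⟨x, hx, _, hsx⟩ := sfn_exists K (u + v)
  rw [hsx, inner_add_right]
  exact add_le_add (inner_le_sfn hx u) (inner_le_sfn hx v)

lemma sfn_homog (K : ConvexBody E) {a : ℝ} (ha : 0 ≤ a) (u : E) : sfn K (a • u) = a * sfn K u := by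
  obtain ⟨x, hx, hm, hs⟩ := sfn_exists K u
  rw [hs, ← real_inner_smul_right]
  apply sfn_eq_of_isMaxOn hx
  intro y hy
  rw [real_inner_smul_right, real_inner_smul_right]
  exact mul_le_mul_of_nonneg_left (hm y hy) ha

lemma sfn_zero_right (K : ConvexBody E) : sfn K 0 = 0 := by
  have := sfn_homog K (le_refl 0) 0
  simpa using this

/-- separation: a point satisfying all support inequalities is in the body. -/
lemma mem_of_forall_inner_le {K : ConvexBody E} {x : E} (h : ∀ u, ⟪x, u⟫ ≤ sfn K u) :
    x ∈ K := by
  by_contra hx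
  obtain ⟨f, s, hfK, hsx⟩ := geometric_hahn_banach_closed_point K.convex K.isClosed hx
  set u : E := (InnerProductSpace.toDual ℝ _).symm f with hu
  have hfu : ∀ y : E, ⟪u, y⟫ = f y := fun y => InnerProductSpace.toDual_symm_apply
  have h1 : sfn K u < s := by
    obtain ⟨z, hz, _, hs⟩ := sfn_exists K u
    rw [hs, real_inner_comm, hfu]
    exact hfK z hz
  have h2 : s < ⟪x, u⟫ := by rw [real_inner_comm, hfu]; exact hsx
  exact absurd (h u) (not_le.mpr (h1.trans h2))

lemma coe_subset_of_sfn_le {K L : ConvexBody E} (h : ∀ u, sfn K u ≤ sfn L u) :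
    (K : Set E) ⊆ L := fun x hx =>
  mem_of_forall_inner_le (fun u => (inner_le_sfn hx u).trans (h u))

lemma eq_of_sfn_eq {K L : ConvexBody E} (h : ∀ u, sfn K u = sfn L u) : K = L :=
  ConvexBody.ext (subset_antisymm (coe_subset_of_sfn_le (fun u => (h u).le))
    (coe_subset_of_sfn_le (fun u => (h u).ge)))

lemma sfn_finset_sup' {s : Finset E} (hs : s.Nonempty) {K : ConvexBody E}
    (hK : (K : Set E) = convexHull ℝ ↑s) (u : E) :
    sfn K u = s.sup' hs (fun v => ⟪v, u⟫) := by
  apply le_antisymm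
  · obtain ⟨x, hx, _, hsx⟩ := sfn_exists K u
    rw [hsx]
    have hlin : IsLinearMap ℝ (fun y : E => ⟪y, u⟫) :=
      ⟨fun a b => inner_add_left a b u, fun c y => real_inner_smul_left y u c⟩
    have hhalf : Convex ℝ {y : E | ⟪y, u⟫ ≤ s.sup' hs (fun v => ⟪v, u⟫)} :=
      convex_halfSpace_le hlin _
    have : (K : Set E) ⊆ {y : E | ⟪y, u⟫ ≤ s.sup' hs (fun v => ⟪v, u⟫)} := by
      rw [hK]
      refine convexHull_min (fun v hv => ?_) hhalf
      exact Finset.le_sup' (fun v : E => ⟪v, u⟫) hv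
    exact this hx
  · obtain ⟨v, hv, hvs⟩ := Finset.exists_mem_eq_sup' hs (fun v => ⟪v, u⟫)
    rw [hvs]
    exact inner_le_sfn (by rw [← SetLike.mem_coe, hK]; exact subset_convexHull ℝ _ hv) u

lemma abs_sfn_sub_le {K : ConvexBody E} {C : ℝ} (hC : ∀ x ∈ K, ‖x‖ ≤ C) (u v : E) :
    |sfn K u - sfn K v| ≤ C * ‖u - v‖ := by
  have key : ∀ w w' : E, sfn K w - sfn K w' ≤ C * ‖w - w'‖ := by
    intro w w'
    obtain ⟨x, hx, _, hsx⟩ := sfn_exists K w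
    have h1 : ⟪x, w⟫ - ⟪x, w'⟫ = ⟪x, w - w'⟫ := by rw [← inner_sub_right]
    have hb : ⟪x, w - w'⟫ ≤ C * ‖w - w'‖ := by
      calc ⟪x, w - w'⟫ ≤ ‖x‖ * ‖w - w'‖ := real_inner_le_norm _ _
        _ ≤ C * ‖w - w'‖ :=
            mul_le_mul_of_nonneg_right (hC x hx) (norm_nonneg _)
    have h2 := inner_le_sfn hx w'
    rw [hsx]
    linarith
  rw [abs_sub_le_iff]
  constructor
  · exact key u v
  · have := key v u
    rwa [norm_sub_rev] at this

lemma abs_sfn_le {K : ConvexBody E} {C : ℝ} (hC : ∀ x ∈ K, ‖x‖ ≤ C) (u : E) :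
    |sfn K u| ≤ C * ‖u‖ := by
  have := abs_sfn_sub_le hC u 0
  simpa [sfn_zero_right] using this

lemma abs_sfn_sub_le_dist (K L : ConvexBody E) (u : E) :
    |sfn K u - sfn L u| ≤ dist K L * ‖u‖ := by
  have key : ∀ A B : ConvexBody E, sfn A u - sfn B u ≤ dist A B * ‖u‖ := by
    intro A B
    have hd : ∀ ε > (0:ℝ), sfn A u - sfn B u ≤ (dist A B + ε) * ‖u‖ := by
      intro ε hε
      obtain ⟨x, hx, _, hsx⟩ := sfn_exists A u
      have hlt : Metric.hausdorffDist (A : Set E) B < dist A B + ε := by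
        rw [ConvexBody.hausdorffDist_coe]; linarith
      obtain ⟨y, hy, hxy⟩ := Metric.exists_dist_lt_of_hausdorffDist_lt hx hlt
        ConvexBody.hausdorffEdist_ne_top
      have : ⟪x, u⟫ - ⟪y, u⟫ ≤ (dist A B + ε) * ‖u‖ := by
        rw [← inner_sub_left]
        calc ⟪x - y, u⟫ ≤ ‖x - y‖ * ‖u‖ := real_inner_le_norm _ _
          _ ≤ (dist A B + ε) * ‖u‖ := by
              apply mul_le_mul_of_nonneg_right _ (norm_nonneg _)
              rw [← dist_eq_norm]; exact hxy.le
      have hy' := inner_le_sfn hy u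
      rw [hsx]; linarith
    by_contra hcon
    push_neg at hcon
    obtain ⟨ε, hε, hlt⟩ : ∃ ε > (0:ℝ), (dist A B + ε) * ‖u‖ < sfn A u - sfn B u := by
      rcases eq_or_lt_of_le (norm_nonneg u) with h0 | h0
      · refine ⟨1, one_pos, ?_⟩
        rw [← h0, mul_zero]
        have := hd 1 one_pos
        rw [← h0, mul_zero] at this
        nlinarith [hd 1 one_pos]
      · set δ := (sfn A u - sfn B u - dist A B * ‖u‖) / (2 * ‖u‖) with hδ
        have hδpos : 0 < δ := by
          apply div_pos _ (by linarith)
          nlinarith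
        refine ⟨δ, hδpos, ?_⟩
        rw [add_mul, hδ]
        rw [div_mul_eq_mul_div, mul_comm (2:ℝ) ‖u‖, ← div_div]
        rw [mul_div_assoc, div_self (ne_of_gt h0)]
        nlinarith
    exact absurd (hd ε hε) (not_le.mpr hlt)
  rw [abs_sub_le_iff]
  exact ⟨key K L, by rw [dist_comm]; exact key L K⟩


section Sub

variable {f : EuclideanSpace ℝ (Fin n) → ℝ}

lemma f_zero (hhom : ∀ c : ℝ, 0 ≤ c → ∀ u, f (c • u) = c * f u) : f 0 = 0 := by
  have := hhom 0 le_rfl 0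
  simpa using this

variable (hhom : ∀ c : ℝ, 0 ≤ c → ∀ u, f (c • u) = c * f u)
         (hsub : ∀ u v : EuclideanSpace ℝ (Fin n), f (u + v) ≤ f u + f v)

include hhom hsub in
lemma f_neg_ge (u : E) : -f u ≤ f (-u) := by
  have h0 : f 0 ≤ f u + f (-u) := by
    have := hsub u (-u)
    simpa using this
  rw [f_zero hhom] at h0
  linarith

include hhom hsub in
lemma f_bound : ∃ C : ℝ, 0 ≤ C ∧ ∀ u, f u ≤ C * ‖u‖ := by
  classical
  set b : Fin n → E := fun i => EuclideanSpace.single i (1:ℝ) with hb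
  set C : ℝ := ∑ i : Fin n, (|f (b i)| + |f (-(b i))|) with hC
  have hCnn : 0 ≤ C := Finset.sum_nonneg fun i _ => by positivity
  refine ⟨C, hCnn, fun u => ?_⟩
  have hrepr : u = ∑ i : Fin n, u i • b i := by
    have h1 := (EuclideanSpace.basisFun (Fin n) ℝ).sum_repr u
    simp only [EuclideanSpace.basisFun_repr, EuclideanSpace.basisFun_apply] at h1
    simp only [hb]
    exact h1.symm
  have hsum : ∀ (s : Finset (Fin n)) (g : Fin n → E), f (∑ i ∈ s, g i) ≤ ∑ i ∈ s, f (g i) := by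
    intro s
    induction s using Finset.cons_induction with
    | empty => intro g; simp [f_zero hhom]
    | cons a s ha ih =>
        intro g
        rw [Finset.sum_cons, Finset.sum_cons]
        exact (hsub _ _).trans (by linarith [ih g])
  have habs : ∀ i, |u i| ≤ ‖u‖ := by
    intro i
    have : u i = ⟪b i, u⟫ := by
      rw [hb]
      rw [EuclideanSpace.inner_single_left]
      simp
    rw [this]
    have := abs_real_inner_le_norm (b i) u
    have hnb : ‖b i‖ = 1 := by simp [hb, EuclideanSpace.norm_single]
    rw [hnb, one_mul] at this
    exact this
  calc f u = f (∑ i : Fin n, u i • b i) := by rw [← hrepr]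
    _ ≤ ∑ i : Fin n, f (u i • b i) := hsum _ _
    _ ≤ ∑ i : Fin n, ‖u‖ * (|f (b i)| + |f (-(b i))|) := by
        apply Finset.sum_le_sum
        intro i _
        rcases le_or_gt 0 (u i) with h | h
        · rw [hhom _ h]
          calc u i * f (b i) ≤ |u i| * |f (b i)| := by
                have := le_abs_self (f (b i))
                have := abs_nonneg (f (b i))
                nlinarith [le_abs_self (u i), abs_nonneg (u i)]
            _ ≤ ‖u‖ * (|f (b i)| + |f (-(b i))|) := by
                have := habs i
                nlinarith [abs_nonneg (f (b i)), abs_nonneg (f (-(b i))), abs_nonneg (u i)]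
        · have : u i • b i = (-(u i)) • (-(b i)) := by rw [smul_neg, neg_smul, neg_neg]
          rw [this, hhom _ (by linarith)]
          calc (-(u i)) * f (-(b i)) ≤ |u i| * |f (-(b i))| := by
                nlinarith [le_abs_self (f (-(b i))), abs_nonneg (f (-(b i))),
                  neg_le_abs (u i), abs_nonneg (u i)]
            _ ≤ ‖u‖ * (|f (b i)| + |f (-(b i))|) := by
                have := habs i
                nlinarith [abs_nonneg (f (b i)), abs_nonneg (f (-(b i))), abs_nonneg (u i)]
    _ = C * ‖u‖ := by rw [← Finset.mul_sum, ← hC, mul_comm]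

include hhom hsub in
/-- Hahn-Banach: dominated point achieving the support value in direction `u0 ≠ 0`. -/
lemma exists_dominated {u0 : E} (hu0 : u0 ≠ 0) :
    ∃ y : E, (∀ u, ⟪y, u⟫ ≤ f u) ∧ ⟪y, u0⟫ = f u0 := by
  set p : E →ₗ.[ℝ] ℝ := LinearPMap.mkSpanSingleton u0 (f u0) hu0 with hp
  have hdom : ∀ z : p.domain, p z ≤ f z := by
    rintro ⟨z, hz⟩
    have hz' : z ∈ Submodule.span ℝ {u0} := hz
    obtain ⟨c, rfl⟩ := Submodule.mem_span_singleton.mp hz'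
    have happ : p ⟨c • u0, hz⟩ = c * f u0 :=
      (LinearPMap.mkSpanSingleton'_apply u0 (f u0) _ c hz).trans (by rw [smul_eq_mul]; rfl)
    rw [happ]
    show c * f u0 ≤ f (c • u0)
    rcases le_or_gt 0 c with h | h
    · rw [hhom c h]
    · have hcu : c • u0 = (-c) • (-u0) := by rw [smul_neg, neg_smul, neg_neg]
      rw [hcu, hhom _ (by linarith)]
      have := f_neg_ge hhom hsub u0
      nlinarith
  obtain ⟨g, hg_eq, hg_le⟩ := exists_extension_of_le_sublinear p f
    (fun c hc u => hhom c hc.le u) hsub hdom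
  set y : E := (InnerProductSpace.toDual ℝ _).symm (LinearMap.toContinuousLinearMap g) with hy
  have hyu : ∀ u : E, ⟪y, u⟫ = g u := fun u => InnerProductSpace.toDual_symm_apply
  refine ⟨y, fun u => by rw [hyu]; exact hg_le u, ?_⟩
  rw [hyu]
  have hmem : u0 ∈ p.domain := by
    rw [hp, LinearPMap.domain_mkSpanSingleton]
    exact Submodule.mem_span_singleton_self u0
  have h2 := hg_eq ⟨u0, hmem⟩
  rw [h2]
  exact LinearPMap.mkSpanSingleton'_apply_self u0 (f u0) _ hmem

include hhom hsub in
lemma bodyOf_aux :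
    ∃ K : ConvexBody E, (K : Set E) = {x : E | ∀ u, ⟪x, u⟫ ≤ f u} ∧ ∀ u, sfn K u = f u := by
  classical
  set S : Set E := {x : E | ∀ u, ⟪x, u⟫ ≤ f u} with hS
  obtain ⟨C, hC0, hCb⟩ := f_bound hhom hsub
  have hconv : Convex ℝ S := by
    intro x hx y hy a b ha hb hab
    intro u
    have := hx u; have := hy u
    calc ⟪a • x + b • y, u⟫ = a * ⟪x, u⟫ + b * ⟪y, u⟫ := by
          rw [inner_add_left, real_inner_smul_left, real_inner_smul_left]
      _ ≤ a * f u + b * f u := by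
          apply add_le_add (mul_le_mul_of_nonneg_left (hx u) ha)
            (mul_le_mul_of_nonneg_left (hy u) hb)
      _ = f u := by rw [← add_mul, hab, one_mul]
  have hclosed : IsClosed S := by
    have : S = ⋂ u : E, {x : E | ⟪x, u⟫ ≤ f u} := by
      ext x; simp [hS, Set.mem_iInter]
    rw [this]
    exact isClosed_iInter fun u =>
      isClosed_le (Continuous.inner continuous_id continuous_const) continuous_const
  have hbddnorm : ∀ x ∈ S, ‖x‖ ≤ C := by
    intro x hx
    rcases eq_or_ne x 0 with rfl | hx0
    · simpa using hC0
    · have h1 : ⟪x, x⟫ ≤ f x := hx x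
      have h2 : f x ≤ C * ‖x‖ := hCb x
      have h3 : ‖x‖ * ‖x‖ ≤ C * ‖x‖ := by
        rw [← real_inner_self_eq_norm_mul_norm]
        linarith
      have hxp : 0 < ‖x‖ := norm_pos_iff.mpr hx0
      exact le_of_mul_le_mul_right (by linarith) hxp
  have hbdd : Bornology.IsBounded S := by
    apply Bornology.IsBounded.subset (Metric.isBounded_closedBall (x := (0:E)) (r := C))
    intro x hx
    simpa [Metric.mem_closedBall, dist_zero_right] using hbddnorm x hx
  have hne : S.Nonempty := by
    by_cases hall : ∀ u : E, u = 0
    · refine ⟨0, fun u => ?_⟩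
      rw [hall u]
      simp [f_zero hhom]
    · push_neg at hall
      obtain ⟨u0, hu0⟩ := hall
      obtain ⟨y, hy, _⟩ := exists_dominated hhom hsub hu0
      exact ⟨y, hy⟩
  have hcomp : IsCompact S :=
    Metric.isCompact_of_isClosed_isBounded hclosed hbdd
  set K : ConvexBody E := ⟨S, hconv, hcomp, hne⟩ with hK
  refine ⟨K, rfl, fun u => ?_⟩
  apply le_antisymm
  · obtain ⟨x, hx, _, hsx⟩ := sfn_exists K u
    rw [hsx]
    exact hx u
  · rcases eq_or_ne u 0 with rfl | hu
    · rw [sfn_zero_right, f_zero hhom]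
    · obtain ⟨y, hy, hyu⟩ := exists_dominated hhom hsub hu
      rw [← hyu]
      have hyK : y ∈ K := hy
      exact inner_le_sfn hyK u

end Sub

/-- If the subadditivity defect of `K` is dominated by that of `Q`, after scaling by... then
`Q` decomposes. -/
lemma exists_summand (Q K : ConvexBody E)
    (h : ∀ u v : E, sfn K u + sfn K v - sfn K (u + v) ≤ sfn Q u + sfn Q v - sfn Q (u + v)) :
    ∃ R : ConvexBody E, Q = K + R ∧ ∀ u, sfn R u = sfn Q u - sfn K u := by
  set g : E → ℝ := fun u => sfn Q u - sfn K u with hg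
  have hhom : ∀ c : ℝ, 0 ≤ c → ∀ u, g (c • u) = c * g u := by
    intro c hc u
    simp only [hg]
    rw [sfn_homog Q hc, sfn_homog K hc]
    ring
  have hsub : ∀ u v : E, g (u + v) ≤ g u + g v := by
    intro u v
    simp only [hg]
    have := h u v
    linarith
  obtain ⟨R, _, hR⟩ := bodyOf_aux hhom hsub
  refine ⟨R, ?_, hR⟩
  apply eq_of_sfn_eq
  intro u
  rw [sfn_add, hR]
  simp [hg]


end SfnAux

namespace Poly

open SfnAux

variable {n : ℕ}

local notation "E" => EuclideanSpace ℝ (Fin n)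


lemma sfn_continuous (K : ConvexBody E) : Continuous (fun u : E => sfn K u) := by
  obtain ⟨C, hC⟩ := K.isBounded.exists_norm_le
  have hC0 : 0 ≤ max C 0 := le_max_right _ _
  apply LipschitzWith.continuous (K := (max C 0).toNNReal)
  apply LipschitzWith.of_dist_le_mul
  intro u v
  rw [Real.dist_eq, dist_eq_norm]
  have := abs_sfn_sub_le (K := K) (C := max C 0)
    (fun x hx => le_trans (hC x hx) (le_max_left _ _)) u v
  calc |sfn K u - sfn K v| ≤ max C 0 * ‖u - v‖ := this
    _ = (max C 0).toNNReal * ‖u - v‖ := by rw [Real.coe_toNNReal _ hC0]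

lemma isPolytope_body_of_finset (s : Finset E) (hs : s.Nonempty) :
    ∃ K : ConvexBody E, (K : Set E) = convexHull ℝ ↑s := by
  refine ⟨⟨convexHull ℝ ↑s, convex_convexHull ℝ _, s.finite_toSet.isCompact_convexHull ℝ, ?_⟩, rfl⟩
  exact Set.Nonempty.mono (subset_convexHull ℝ _) (by exact_mod_cast hs.to_set)

lemma finset_nonempty_of_polytope {K : ConvexBody E} {s : Finset E}
    (hK : (K : Set E) = convexHull ℝ ↑s) : s.Nonempty := by
  by_contra h
  rw [Finset.not_nonempty_iff_eq_empty] at h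
  subst h
  have := K.nonempty
  rw [hK] at this
  simpa using this

lemma isPolytope_add {K L : ConvexBody E} (hK : IsPolytope K) (hL : IsPolytope L) :
    IsPolytope (K + L) := by
  classical
  obtain ⟨s, hs⟩ := hK
  obtain ⟨t, ht⟩ := hL
  refine ⟨s + t, ?_⟩
  rw [ConvexBody.coe_add, hs, ht, Finset.coe_add, convexHull_add]

lemma isPolytope_smul {K : ConvexBody E} (a : ℝ) (hK : IsPolytope K) :
    IsPolytope (a • K) := by
  classical
  obtain ⟨s, hs⟩ := hK
  refine ⟨a • s, ?_⟩
  rw [ConvexBody.coe_smul, hs, Finset.coe_smul_finset, convexHull_smul]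

/-- unique maximizer in a polytope, for directions in the open normal cone of `v`. -/
lemma unique_max {s : Finset E} {v : E} {u : E}
    (hcell : ∀ b ∈ s, b ≠ v → ⟪b, u⟫ < ⟪v, u⟫) {x : E} (hx : x ∈ convexHull ℝ (↑s : Set E))
    (hmax : ⟪x, u⟫ = ⟪v, u⟫) : x = v := by
  classical
  rw [Finset.convexHull_eq] at hx
  obtain ⟨w, hw0, hw1, hwx⟩ := hx
  have hxval : x = ∑ i ∈ s, w i • i := by
    rw [← hwx, Finset.centerMass_eq_of_sum_1 _ _ hw1]
    rfl
  have hinner : ⟪x, u⟫ = ∑ i ∈ s, w i * ⟪i, u⟫ := by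
    rw [hxval, sum_inner]
    congr 1
    ext i
    rw [real_inner_smul_left]
  by_cases hb : ∃ b ∈ s, b ≠ v ∧ 0 < w b
  · exfalso
    obtain ⟨b, hbs, hbv, hwb⟩ := hb
    have hlt : ∑ i ∈ s, w i * ⟪i, u⟫ < ∑ i ∈ s, w i * ⟪v, u⟫ := by
      apply Finset.sum_lt_sum
      · intro i hi
        rcases eq_or_ne i v with rfl | hiv
        · exact le_refl _
        · exact mul_le_mul_of_nonneg_left (hcell i hi hiv).le (hw0 i hi)
      · exact ⟨b, hbs, mul_lt_mul_of_pos_left (hcell b hbs hbv) hwb⟩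
    rw [← Finset.sum_mul, hw1, one_mul] at hlt
    rw [hinner] at hmax
    linarith
  · push_neg at hb
    have hvz : ∀ b ∈ s, b ≠ v → w b = 0 := by
      intro b hbs hbv
      exact le_antisymm (hb b hbs hbv) (hw0 b hbs)
    have hvs : v ∈ s := by
      by_contra hvs
      have : ∑ i ∈ s, w i = 0 := by
        apply Finset.sum_eq_zero
        intro i hi
        exact hvz i hi (fun h => hvs (h ▸ hi))
      rw [hw1] at this
      norm_num at this
    have hwv : w v = 1 := by
      have : ∑ i ∈ s, w i = w v := by
        apply Finset.sum_eq_single_of_mem v hvs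
        intro i hi hiv
        exact hvz i hi hiv
      rw [hw1] at this
      exact this.symm
    rw [hxval]
    rw [Finset.sum_eq_single_of_mem v hvs]
    · rw [hwv, one_smul]
    · intro i hi hiv
      rw [hvz i hi hiv, zero_smul]

/-- a vector not orthogonal to any member of a finite set of nonzero vectors -/
lemma exists_inner_ne (s : Finset E) (h0 : (0:E) ∉ s) : ∃ y : E, ∀ c ∈ s, ⟪c, y⟫ ≠ 0 := by
  classical
  induction s using Finset.cons_induction with
  | empty => exact ⟨0, by simp⟩
  | cons a s ha ih =>
      obtain ⟨y, hy⟩ := ih (fun h => h0 (Finset.mem_cons_of_mem h))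
      have hane : a ≠ 0 := fun h => h0 (h ▸ Finset.mem_cons_self a s)
      set bad : Set ℝ := insert 0 ((fun c => -⟪c, y⟫ / ⟪c, a⟫) '' ↑(Finset.cons a s ha)) with hbad
      have hbadfin : bad.Finite :=
        Set.Finite.insert 0 ((Finset.cons a s ha).finite_toSet.image _)
      obtain ⟨t, ht⟩ := hbadfin.infinite_compl.nonempty
      refine ⟨y + t • a, ?_⟩
      intro c hc
      rw [inner_add_right, real_inner_smul_right]
      intro hcon
      by_cases hca : ⟪c, a⟫ = 0
      · rcases Finset.mem_cons.mp hc with rfl | hcs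
        · rw [real_inner_self_eq_norm_sq] at hca
          have : c = 0 := by
            have := sq_eq_zero_iff.mp hca
            simpa [norm_eq_zero] using this
          exact hane this
        · rw [hca, mul_zero, add_zero] at hcon
          exact hy c hcs hcon
      · have htz : t = -⟪c, y⟫ / ⟪c, a⟫ := by
          rw [eq_div_iff hca]
          linarith
        apply ht
        rw [hbad]
        right
        exact ⟨c, hc, htz.symm⟩

lemma dense_good (s : Finset E) (h0 : (0:E) ∉ s) :
    Dense {u : E | ∀ c ∈ s, ⟪c, u⟫ ≠ 0} := by
  classical
  obtain ⟨y, hy⟩ := exists_inner_ne s h0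
  rw [Metric.dense_iff]
  intro x ε hε
  set r : ℝ := ε / (‖y‖ + 1) with hr
  have hrpos : 0 < r := div_pos hε (by positivity)
  set bad : Set ℝ := (fun c => -⟪c, x⟫ / ⟪c, y⟫) '' ↑s with hbad
  have hbadfin : bad.Finite := s.finite_toSet.image _
  have hIoo : (Set.Ioo (-r) r).Infinite := by
    rw [Set.infinite_coe_iff.symm]
    exact Set.Ioo.infinite (by linarith)
  obtain ⟨t, htI, htb⟩ := (hIoo.diff hbadfin).nonempty
  refine ⟨x + t • y, ?_, ?_⟩
  · rw [Metric.mem_ball, dist_eq_norm]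
    have : x + t • y - x = t • y := by abel
    rw [this, norm_smul]
    have h1 : |t| < r := abs_lt.mpr ⟨htI.1, htI.2⟩
    have h2 : ‖y‖ < ‖y‖ + 1 := by linarith
    calc ‖t‖ * ‖y‖ ≤ |t| * (‖y‖ + 1) := by
          rw [Real.norm_eq_abs]
          exact mul_le_mul_of_nonneg_left (by linarith) (abs_nonneg t)
      _ < r * (‖y‖ + 1) := by
          apply mul_lt_mul_of_pos_right h1 (by positivity)
      _ = ε := by rw [hr]; field_simp
  · intro c hc
    rw [inner_add_right, real_inner_smul_right]
    intro hcon
    apply htb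
    rw [hbad]
    refine ⟨c, hc, ?_⟩
    rw [eq_comm, eq_div_iff (hy c hc)]
    linarith

/-- Summands of polytopes are polytopes. -/
lemma isPolytope_summand {Q K R : ConvexBody E} (hQ : IsPolytope Q) (hsum : Q = K + R) :
    IsPolytope K := by
  classical
  obtain ⟨s, hs⟩ := hQ
  have hsne : s.Nonempty := finset_nonempty_of_polytope hs
  -- the maximizer choice function for K and R
  set k : E → E := fun u => (sfn_exists K u).choose with hk
  have hkmem : ∀ u, k u ∈ K := fun u => (sfn_exists K u).choose_spec.1
  have hkmax : ∀ u, ∀ z ∈ K, ⟪z, u⟫ ≤ ⟪k u, u⟫ := fun u => (sfn_exists K u).choose_spec.2.1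
  have hksfn : ∀ u, sfn K u = ⟪k u, u⟫ := fun u => (sfn_exists K u).choose_spec.2.2
  set rr : E → E := fun u => (sfn_exists R u).choose with hrr
  have hrmem : ∀ u, rr u ∈ R := fun u => (sfn_exists R u).choose_spec.1
  have hrmax : ∀ u, ∀ z ∈ R, ⟪z, u⟫ ≤ ⟪rr u, u⟫ := fun u => (sfn_exists R u).choose_spec.2.1
  have hrsfn : ∀ u, sfn R u = ⟪rr u, u⟫ := fun u => (sfn_exists R u).choose_spec.2.2
  -- cells
  set Cell : E → Set E := fun v => {u : E | ∀ b ∈ s, b ≠ v → ⟪b, u⟫ < ⟪v, u⟫} with hCell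
  -- basic facts on cells
  have hsfnQ : ∀ v ∈ s, ∀ u ∈ Cell v, sfn Q u = ⟪v, u⟫ := by
    intro v hv u hu
    rw [sfn_finset_sup' hsne hs]
    apply le_antisymm
    · apply Finset.sup'_le
      intro b hb
      rcases eq_or_ne b v with rfl | hbv
      · exact le_refl _
      · exact (hu b hb hbv).le
    · exact Finset.le_sup' (fun b => ⟪b, u⟫) hv
  have hkr : ∀ v ∈ s, ∀ u ∈ Cell v, k u + rr u = v := by
    intro v hv u hu
    have hmem : k u + rr u ∈ Q := by
      rw [hsum, ← SetLike.mem_coe, ConvexBody.coe_add]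
      exact Set.add_mem_add (hkmem u) (hrmem u)
    have hval : ⟪k u + rr u, u⟫ = ⟪v, u⟫ := by
      rw [← hsfnQ v hv u hu, hsum, sfn_add, inner_add_left, hksfn, hrsfn]
    apply unique_max hu _ hval
    rw [← hs]
    exact hmem
  -- constancy of k on cells
  have hconst : ∀ v ∈ s, ∀ u ∈ Cell v, ∀ w ∈ Cell v, k u = k w := by
    intro v hv u hu w hw
    have h1 : ⟪k w, u⟫ ≤ ⟪k u, u⟫ := hkmax u _ (hkmem w)
    have h2 : ⟪rr w, u⟫ ≤ ⟪rr u, u⟫ := hrmax u _ (hrmem w)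
    have h3 : k u + rr u = v := hkr v hv u hu
    have h4 : k w + rr w = v := hkr v hv w hw
    have h5 : ⟪k u + rr u, u⟫ = ⟪k w + rr w, u⟫ := by rw [h3, h4]
    rw [inner_add_left, inner_add_left] at h5
    have h6 : ⟪k w, u⟫ = ⟪k u, u⟫ := by linarith
    -- k w + rr u is a maximizer in Q at u
    have hmem : k w + rr u ∈ Q := by
      rw [hsum, ← SetLike.mem_coe, ConvexBody.coe_add]
      exact Set.add_mem_add (hkmem w) (hrmem u)
    have hval : ⟪k w + rr u, u⟫ = ⟪v, u⟫ := by
      rw [inner_add_left, h6, ← inner_add_left, h3]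
    have h7 : k w + rr u = v := by
      apply unique_max hu _ hval
      rw [← hs]
      exact hmem
    have := h7.trans h3.symm
    exact (add_right_cancel this).symm
  -- the candidate vertex set for K
  set pick : E → E := fun v => if h : (Cell v).Nonempty then h.choose else 0 with hpick
  have hpickmem : ∀ v, (Cell v).Nonempty → pick v ∈ Cell v := by
    intro v h
    rw [hpick]
    simp only [dif_pos h]
    exact h.choose_spec
  set W : Finset E := s.image (fun v => k (pick v)) with hWdef
  have hWne : W.Nonempty := hsne.image _
  obtain ⟨KW, hKW⟩ := isPolytope_body_of_finset W hWne
  suffices hKeq : ∀ u, sfn K u = sfn KW u by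
    rw [eq_of_sfn_eq hKeq]; exact ⟨W, hKW⟩
  -- dense set of directions with unique maximizer
  set N : Finset E := ((s ×ˢ s).filter (fun p => p.1 ≠ p.2)).image (fun p => p.1 - p.2) with hN
  have hN0 : (0:E) ∉ N := by
    rw [hN]
    intro h
    rw [Finset.mem_image] at h
    obtain ⟨p, hp, hp0⟩ := h
    rw [Finset.mem_filter] at hp
    exact hp.2 (sub_eq_zero.mp hp0)
  have hdense : Dense {u : E | ∀ c ∈ N, ⟪c, u⟫ ≠ 0} := dense_good N hN0
  have heqOn : Set.EqOn (fun u : E => sfn K u) (fun u : E => sfn KW u)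
      {u : E | ∀ c ∈ N, ⟪c, u⟫ ≠ 0} := ?_
  · exact fun u =>
      congrFun (Continuous.ext_on hdense (sfn_continuous K) (sfn_continuous KW) heqOn) u
  intro u hu
  show sfn K u = sfn KW u
  -- u has a unique maximizing vertex v
  obtain ⟨v, hv, hmax⟩ := Finset.exists_max_image s (fun b => ⟪b, u⟫) hsne
  have hucell : u ∈ Cell v := by
    intro b hb hbv
    have hne : ⟪b - v, u⟫ ≠ 0 := by
      apply hu
      rw [hN, Finset.mem_image]
      exact ⟨(b, v), Finset.mem_filter.mpr ⟨Finset.mem_product.mpr ⟨hb, hv⟩, hbv⟩, rfl⟩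
    rw [inner_sub_left] at hne
    rcases lt_or_eq_of_le (hmax b hb) with h | h
    · exact h
    · exact absurd (by linarith : ⟪b,u⟫ - ⟪v,u⟫ = 0) hne
  have hp : pick v ∈ Cell v := hpickmem v ⟨u, hucell⟩
  have hkuv : k u = k (pick v) := hconst v hv u hucell (pick v) hp
  have hWsub : ∀ w ∈ W, w ∈ K := by
    intro w hw
    rw [hWdef, Finset.mem_image] at hw
    obtain ⟨b, _, rfl⟩ := hw
    exact hkmem _
  apply le_antisymm
  · rw [hksfn u, hkuv]
    apply inner_le_sfn _ u
    rw [← SetLike.mem_coe, hKW]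
    apply subset_convexHull ℝ _
    rw [Finset.coe_image]
    exact ⟨v, hv, rfl⟩
  · rw [sfn_finset_sup' hWne hKW]
    apply Finset.sup'_le
    intro w hw
    exact inner_le_sfn (hWsub w hw) u


end Poly

namespace ConeAux

variable {F : Type} [NormedAddCommGroup F] [InnerProductSpace ℝ F] [FiniteDimensional ℝ F]

/-- The conical hull of a finite family. -/
def coneOf {ι : Type} [Fintype ι] (g : ι → F) : Set F :=
  {z | ∃ c : ι → ℝ, (∀ i, 0 ≤ c i) ∧ ∑ i, c i • g i = z}

lemma mem_coneOf {ι : Type} [Fintype ι] (g : ι → F) (c : ι → ℝ) (hc : ∀ i, 0 ≤ c i) :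
    (∑ i, c i • g i) ∈ coneOf g := ⟨c, hc, rfl⟩

lemma generator_mem_coneOf {ι : Type} [Fintype ι] (g : ι → F) (i0 : ι) :
    g i0 ∈ coneOf g := by
  classical
  refine ⟨fun i => if i = i0 then 1 else 0, fun i => by positivity, ?_⟩
  rw [Finset.sum_eq_single_of_mem i0 (Finset.mem_univ _)]
  · simp
  · intro i _ hi
    simp [hi]

lemma zero_mem_coneOf {ι : Type} [Fintype ι] (g : ι → F) : (0:F) ∈ coneOf g :=
  ⟨fun _ => 0, fun _ => le_refl _, by simp⟩

lemma combo_mem_coneOf {ι ι' : Type} [Fintype ι] [Fintype ι'] (g : ι → F) (h : ι' → F)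
    (hh : ∀ i, h i ∈ coneOf g) (c : ι' → ℝ) (hc : ∀ i, 0 ≤ c i) :
    (∑ i, c i • h i) ∈ coneOf g := by
  classical
  set d : ι' → ι → ℝ := fun i => (hh i).choose with hd
  have hd0 : ∀ i j, 0 ≤ d i j := fun i => (hh i).choose_spec.1
  have hdsum : ∀ i, ∑ j, d i j • g j = h i := fun i => (hh i).choose_spec.2
  refine ⟨fun j => ∑ i, c i * d i j, fun j => Finset.sum_nonneg fun i _ =>
    mul_nonneg (hc i) (hd0 i j), ?_⟩
  have : ∀ j, (∑ i, c i * d i j) • g j = ∑ i, (c i * d i j) • g j := fun j =>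
    Finset.sum_smul
  rw [Finset.sum_congr rfl (fun j _ => this j), Finset.sum_comm]
  apply Finset.sum_congr rfl
  intro i _
  rw [← hdsum i, Finset.smul_sum]
  apply Finset.sum_congr rfl
  intro j _
  rw [smul_smul]

lemma inner_sum_coneOf {ι : Type} [Fintype ι] (g : ι → F) {z : F} (w : F)
    (c : ι → ℝ) (hz : ∑ i, c i • g i = z) : ⟪w, z⟫ = ∑ i, c i * ⟪w, g i⟫ := by
  rw [← hz, inner_sum]
  apply Finset.sum_congr rfl
  intro i _
  rw [real_inner_smul_right]

/-- Minkowski-Weyl, hard direction: an intersection of finitely many homogeneous halfspaces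
is a finitely generated cone. -/
lemma mw (L : List F) :
    ∃ (ι : Type) (_ : Fintype ι) (g : ι → F),
      {z : F | ∀ w ∈ L, 0 ≤ ⟪w, z⟫} = coneOf g := by
  classical
  induction L with
  | nil =>
      set b := stdOrthonormalBasis ℝ F with hb
      set d := Module.finrank ℝ F with hdim
      refine ⟨Fin d ⊕ Fin d, inferInstance, Sum.elim (fun i => b i) (fun i => -(b i)), ?_⟩
      ext z
      simp only [Set.mem_setOf_eq, List.not_mem_nil, false_implies, implies_true, true_iff]
      refine ⟨Sum.elim (fun i => max ⟪b i, z⟫ 0) (fun i => max (-⟪b i, z⟫) 0),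
        fun i => by cases i <;> simp [le_max_right], ?_⟩
      rw [Fintype.sum_sum_type]
      simp only [Sum.elim_inl, Sum.elim_inr]
      have : ∀ i : Fin d, max ⟪b i, z⟫ 0 • b i + max (-⟪b i, z⟫) 0 • (-(b i))
          = ⟪b i, z⟫ • b i := by
        intro i
        rw [smul_neg, ← sub_eq_add_neg, ← sub_smul]
        congr 1
        rcases le_or_gt 0 (⟪b i, z⟫) with h | h
        · rw [max_eq_left h, max_eq_right (by linarith)]; ring
        · rw [max_eq_right h.le, max_eq_left (by linarith)]; ring
      rw [← Finset.sum_add_distrib]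
      rw [Finset.sum_congr rfl (fun i _ => this i)]
      exact b.sum_repr' z
  | cons w L ih =>
      obtain ⟨ι, _, g, hg⟩ := ih
      refine ⟨ι ⊕ ι × ι, inferInstance, ?_, ?_⟩
      · exact Sum.elim (fun i => if 0 ≤ ⟪w, g i⟫ then g i else 0)
          (fun p => if 0 < ⟪w, g p.1⟫ ∧ ⟪w, g p.2⟫ < 0 then
            ⟪w, g p.1⟫ • g p.2 + (-⟪w, g p.2⟫) • g p.1 else 0)
      set g' : ι ⊕ ι × ι → F := Sum.elim (fun i => if 0 ≤ ⟪w, g i⟫ then g i else 0)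
          (fun p => if 0 < ⟪w, g p.1⟫ ∧ ⟪w, g p.2⟫ < 0 then
            ⟪w, g p.1⟫ • g p.2 + (-⟪w, g p.2⟫) • g p.1 else 0) with hg'def
      have hCset : {z : F | ∀ v ∈ w :: L, 0 ≤ ⟪v, z⟫}
          = (coneOf g) ∩ {z : F | 0 ≤ ⟪w, z⟫} := by
        ext z
        simp only [Set.mem_setOf_eq, List.mem_cons, Set.mem_inter_iff, ← hg, Set.mem_setOf_eq]
        constructor
        · intro h
          exact ⟨fun v hv => h v (Or.inr hv), h w (Or.inl rfl)⟩
        · rintro ⟨h1, h2⟩ v (rfl | hv)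
          · exact h2
          · exact h1 v hv
      rw [hCset]
      -- generators belong to the intersection
      have hgen_mem : ∀ i : ι ⊕ ι × ι, g' i ∈ (coneOf g) ∩ {z : F | 0 ≤ ⟪w, z⟫} := by
        rintro (i | ⟨i, j⟩)
        · simp only [hg'def, Sum.elim_inl]
          split_ifs with h
          · exact ⟨generator_mem_coneOf g i, h⟩
          · exact ⟨zero_mem_coneOf g, by simp⟩
        · simp only [hg'def, Sum.elim_inr]
          split_ifs with h
          · constructor
            · refine ⟨fun k => (if k = j then ⟪w, g i⟫ else 0) +
                (if k = i then -⟪w, g j⟫ else 0), ?_, ?_⟩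
              · intro k
                apply add_nonneg
                · split_ifs
                  · exact h.1.le
                  · exact le_refl _
                · split_ifs
                  · linarith [h.2]
                  · exact le_refl _
              · rw [Finset.sum_congr rfl (fun k _ => add_smul _ _ (g k)),
                  Finset.sum_add_distrib]
                congr 1
                · rw [Finset.sum_eq_single_of_mem j (Finset.mem_univ _)]
                  · rw [if_pos rfl]
                  · intro k _ hk
                    rw [if_neg hk, zero_smul]
                · rw [Finset.sum_eq_single_of_mem i (Finset.mem_univ _)]
                  · rw [if_pos rfl]
                  · intro k _ hk
                    rw [if_neg hk, zero_smul]
            · simp only [Set.mem_setOf_eq, inner_add_right, real_inner_smul_right]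
              nlinarith [h.1, h.2]
          · exact ⟨zero_mem_coneOf g, by simp⟩
      apply subset_antisymm
      · -- hard inclusion
        rintro z ⟨hzC, hzw⟩
        obtain ⟨c, hc0, hcz⟩ := hzC
        have hinner := inner_sum_coneOf g w c hcz
        set Spos := Finset.univ.filter (fun i : ι => 0 < ⟪w, g i⟫) with hSpos
        set Sneg := Finset.univ.filter (fun i : ι => ⟪w, g i⟫ < 0) with hSneg
        set Szero := Finset.univ.filter (fun i : ι => ⟪w, g i⟫ = 0) with hSzero
        set P := ∑ i ∈ Spos, c i * ⟪w, g i⟫ with hP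
        set N := ∑ i ∈ Sneg, c i * ⟪w, g i⟫ with hN
        have hPnn : 0 ≤ P := Finset.sum_nonneg fun i hi => by
          rw [hSpos, Finset.mem_filter] at hi
          exact mul_nonneg (hc0 i) hi.2.le
        have hNnp : N ≤ 0 := Finset.sum_nonpos fun i hi => by
          rw [hSneg, Finset.mem_filter] at hi
          exact mul_nonpos_of_nonneg_of_nonpos (hc0 i) hi.2.le
        have hsplit : ⟪w, z⟫ = P + N := by
          rw [hinner, hP, hN]
          rw [← Finset.sum_filter_add_sum_filter_not Finset.univ (fun i => 0 < ⟪w, g i⟫)]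
          congr 1
          rw [← Finset.sum_filter_add_sum_filter_not
            (Finset.univ.filter (fun i => ¬ 0 < ⟪w, g i⟫)) (fun i => ⟪w, g i⟫ < 0)]
          rw [Finset.filter_filter, Finset.filter_filter]
          have e1 : Finset.univ.filter (fun i : ι => ¬0 < ⟪w, g i⟫ ∧ ⟪w, g i⟫ < 0) = Sneg := by
            rw [hSneg]
            apply Finset.filter_congr
            intro i _
            constructor
            · rintro ⟨_, h⟩; exact h
            · intro h; exact ⟨by linarith, h⟩
          have e2 : (Finset.univ.filter (fun i : ι => ¬0 < ⟪w, g i⟫ ∧ ¬⟪w, g i⟫ < 0)).sum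
              (fun i => c i * ⟪w, g i⟫) = 0 := by
            apply Finset.sum_eq_zero
            intro i hi
            rw [Finset.mem_filter] at hi
            have : ⟪w, g i⟫ = 0 := by
              cases' hi.2 with h1 h2
              linarith
            rw [this, mul_zero]
          rw [e1, e2, add_zero]
        -- case analysis on N
        rcases eq_or_lt_of_le hNnp with hN0 | hNlt
        · -- no negative mass : z uses only nonnegative generators
          have hczero : ∀ i ∈ Sneg, c i = 0 := by
            intro i hi
            have hall : ∀ j ∈ Sneg, c j * ⟪w, g j⟫ ≤ 0 := fun j hj => by
              rw [hSneg, Finset.mem_filter] at hj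
              exact mul_nonpos_of_nonneg_of_nonpos (hc0 j) hj.2.le
            have := (Finset.sum_eq_zero_iff_of_nonpos hall).mp hN0 i hi
            rw [hSneg, Finset.mem_filter] at hi
            rcases mul_eq_zero.mp this with h | h
            · exact h
            · linarith [hi.2]
          refine ⟨Sum.elim (fun i => if 0 ≤ ⟪w, g i⟫ then c i else 0) (fun _ => 0), ?_, ?_⟩
          · rintro (i | p)
            · simp only [Sum.elim_inl]
              split_ifs
              exacts [hc0 i, le_refl _]
            · simp only [Sum.elim_inr]
              exact le_refl _
          rw [Fintype.sum_sum_type]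
          simp only [Sum.elim_inl, Sum.elim_inr, zero_smul, Finset.sum_const_zero, add_zero]
          rw [← hcz]
          apply Finset.sum_congr rfl
          intro i _
          simp only [hg'def, Sum.elim_inl]
          rcases le_or_gt 0 (⟪w, g i⟫) with h | h
          · rw [if_pos h, if_pos h]
          · rw [if_neg (by linarith), if_neg (by linarith)]
            have hci : c i = 0 := by
              apply hczero i
              rw [hSneg, Finset.mem_filter]
              exact ⟨Finset.mem_univ _, h⟩
            rw [hci]
            simp
        · -- negative mass present: P > 0
          have hPpos : 0 < P := by
            have : 0 ≤ P + N := by rw [← hsplit]; exact hzw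
            linarith
          set cpos : ι → ℝ := fun i =>
            if 0 < ⟪w, g i⟫ then c i * ⟪w, z⟫ / P else if ⟪w, g i⟫ = 0 then c i else 0
            with hcpos
          set cpair : ι × ι → ℝ := fun p =>
            if 0 < ⟪w, g p.1⟫ ∧ ⟪w, g p.2⟫ < 0 then c p.1 * c p.2 / P else 0 with hcpair
          refine ⟨Sum.elim cpos cpair, ?_, ?_⟩
          · rintro (i | p)
            · simp only [Sum.elim_inl, hcpos]
              split_ifs with h1 h2
              · exact div_nonneg (mul_nonneg (hc0 i) hzw) hPpos.le
              · exact hc0 i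
              · exact le_refl _
            · simp only [Sum.elim_inr, hcpair]
              split_ifs with h1
              · exact div_nonneg (mul_nonneg (hc0 p.1) (hc0 p.2)) hPpos.le
              · exact le_refl _
          · rw [Fintype.sum_sum_type]
            simp only [hg'def, Sum.elim_inl, Sum.elim_inr]
            set A : F := ∑ i ∈ Spos, c i • g i with hA
            set B : F := ∑ i ∈ Sneg, c i • g i with hB
            set Z0 : F := ∑ i ∈ Szero, c i • g i with hZ0
            have hzABZ : A + B + Z0 = z := by
              rw [← hcz, hA, hB, hZ0]
              rw [← Finset.sum_filter_add_sum_filter_not Finset.univ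
                (fun i => 0 < ⟪w, g i⟫) (fun i => c i • g i)]
              rw [← Finset.sum_filter_add_sum_filter_not
                (Finset.univ.filter (fun i => ¬ 0 < ⟪w, g i⟫)) (fun i => ⟪w, g i⟫ < 0)
                (fun i => c i • g i)]
              rw [Finset.filter_filter, Finset.filter_filter]
              have e1 : Finset.univ.filter (fun i : ι => ¬0 < ⟪w, g i⟫ ∧ ⟪w, g i⟫ < 0)
                  = Sneg := by
                rw [hSneg]
                apply Finset.filter_congr
                intro i _
                constructor
                · rintro ⟨_, h⟩; exact h
                · intro h; exact ⟨by linarith, h⟩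
              have e2 : Finset.univ.filter (fun i : ι => ¬0 < ⟪w, g i⟫ ∧ ¬⟪w, g i⟫ < 0)
                  = Szero := by
                rw [hSzero]
                apply Finset.filter_congr
                intro i _
                constructor
                · rintro ⟨h1, h2⟩; linarith
                · intro h; constructor <;> [linarith; linarith]
              rw [e1, e2, add_assoc]
            -- first sum
            have hS1 : (∑ i : ι, cpos i • (if 0 ≤ ⟪w, g i⟫ then g i else 0))
                = (⟪w, z⟫ / P) • A + Z0 := by
              have hterm : ∀ i : ι, cpos i • (if 0 ≤ ⟪w, g i⟫ then g i else 0)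
                  = (if 0 < ⟪w, g i⟫ then ((⟪w, z⟫ / P) * c i) • g i else 0)
                    + (if ⟪w, g i⟫ = 0 then c i • g i else 0) := by
                intro i
                rcases lt_trichotomy (⟪w, g i⟫) 0 with h | h | h
                · rw [hcpos]
                  simp only [if_neg (by linarith : ¬ 0 < ⟪w, g i⟫), if_neg (by linarith :
                    ¬ ⟪w, g i⟫ = (0:ℝ)), if_neg (by linarith : ¬ (0:ℝ) ≤ ⟪w, g i⟫)]
                  simp
                · rw [hcpos]
                  simp only [if_neg (by linarith : ¬ 0 < ⟪w, g i⟫), if_pos h,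
                    if_pos (by linarith : (0:ℝ) ≤ ⟪w, g i⟫)]
                  simp
                · rw [hcpos]
                  simp only [if_pos h, if_neg (by linarith : ¬ ⟪w, g i⟫ = (0:ℝ)),
                    if_pos (by linarith : (0:ℝ) ≤ ⟪w, g i⟫)]
                  rw [add_zero]
                  congr 1
                  field_simp
              rw [Finset.sum_congr rfl (fun i _ => hterm i), Finset.sum_add_distrib]
              congr 1
              · rw [← Finset.sum_filter, ← hSpos, Finset.smul_sum]
                apply Finset.sum_congr rfl
                intro i _
                rw [smul_smul]
              · rw [← Finset.sum_filter, ← hSzero]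
            -- second sum
            have hS2 : (∑ p : ι × ι, cpair p •
                (if 0 < ⟪w, g p.1⟫ ∧ ⟪w, g p.2⟫ < 0 then
                  ⟪w, g p.1⟫ • g p.2 + (-⟪w, g p.2⟫) • g p.1 else 0))
                = B + (-N / P) • A := by
              have hterm : ∀ p : ι × ι, cpair p •
                  (if 0 < ⟪w, g p.1⟫ ∧ ⟪w, g p.2⟫ < 0 then
                    ⟪w, g p.1⟫ • g p.2 + (-⟪w, g p.2⟫) • g p.1 else 0)
                  = if p ∈ Spos ×ˢ Sneg then
                      (c p.1 * c p.2 / P) • (⟪w, g p.1⟫ • g p.2 + (-⟪w, g p.2⟫) • g p.1)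
                    else 0 := by
                intro p
                have hmemiff : p ∈ Spos ×ˢ Sneg ↔ (0 < ⟪w, g p.1⟫ ∧ ⟪w, g p.2⟫ < 0) := by
                  rw [Finset.mem_product, hSpos, hSneg, Finset.mem_filter, Finset.mem_filter]
                  constructor
                  · rintro ⟨⟨_, h1⟩, ⟨_, h2⟩⟩; exact ⟨h1, h2⟩
                  · rintro ⟨h1, h2⟩; exact ⟨⟨Finset.mem_univ _, h1⟩, ⟨Finset.mem_univ _, h2⟩⟩
                by_cases h : 0 < ⟪w, g p.1⟫ ∧ ⟪w, g p.2⟫ < 0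
                · simp only [hcpair, if_pos h, if_pos (hmemiff.mpr h)]
                · simp only [hcpair, if_neg h, if_neg (fun hc => h (hmemiff.mp hc))]
                  simp
              rw [Finset.sum_congr rfl (fun p _ => hterm p)]
              rw [Finset.sum_ite_mem, Finset.univ_inter, Finset.sum_product]
              have hsplit2 : ∀ i ∈ Spos, ∀ j ∈ Sneg,
                  (c i * c j / P) • (⟪w, g i⟫ • g j + (-⟪w, g j⟫) • g i)
                  = ((c i * ⟪w, g i⟫ / P) * c j) • g j
                    + ((c j * (-⟪w, g j⟫) / P) * c i) • g i := by
                intro i _ j _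
                rw [smul_add, smul_smul, smul_smul]
                congr 2 <;> ring
              rw [Finset.sum_congr rfl (fun i hi => Finset.sum_congr rfl (hsplit2 i hi))]
              have : (∑ i ∈ Spos, ∑ j ∈ Sneg,
                  (((c i * ⟪w, g i⟫ / P) * c j) • g j
                    + ((c j * (-⟪w, g j⟫) / P) * c i) • g i))
                  = (∑ i ∈ Spos, ∑ j ∈ Sneg, ((c i * ⟪w, g i⟫ / P) * c j) • g j)
                    + ∑ i ∈ Spos, ∑ j ∈ Sneg, ((c j * (-⟪w, g j⟫) / P) * c i) • g i := by
                rw [← Finset.sum_add_distrib]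
                apply Finset.sum_congr rfl
                intro i _
                rw [← Finset.sum_add_distrib]
              rw [this]
              congr 1
              · rw [Finset.sum_comm]
                rw [hB]
                apply Finset.sum_congr rfl
                intro j _
                rw [← Finset.sum_smul]
                congr 1
                rw [← Finset.sum_mul]
                have : (∑ i ∈ Spos, c i * ⟪w, g i⟫ / P) = P / P := by
                  rw [← Finset.sum_div, ← hP]
                rw [this, div_self hPpos.ne', one_mul]
              · rw [hA, Finset.smul_sum]
                apply Finset.sum_congr rfl
                intro i _
                rw [← Finset.sum_smul, smul_smul]
                congr 1
                rw [← Finset.sum_mul]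
                have : (∑ j ∈ Sneg, c j * -⟪w, g j⟫ / P) = -N / P := by
                  rw [← Finset.sum_div]
                  congr 1
                  rw [hN, ← Finset.sum_neg_distrib]
                  apply Finset.sum_congr rfl
                  intro j _
                  ring
                rw [this]
            rw [hS1, hS2]
            conv_rhs => rw [← hzABZ]
            have hcoef : (⟪w, z⟫ / P) • A + (-N / P) • A = A := by
              rw [← add_smul]
              have : ⟪w, z⟫ / P + -N / P = 1 := by
                rw [← add_div, hsplit]
                field_simp
                ring
              rw [this, one_smul]
            calc (⟪w, z⟫ / P) • A + Z0 + (B + (-N / P) • A)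
                = ((⟪w, z⟫ / P) • A + (-N / P) • A) + B + Z0 := by abel
              _ = A + B + Z0 := by rw [hcoef]
      · -- easy inclusion
        rintro z ⟨c, hc0, hcz⟩
        rw [← hcz]
        have h1 : (∑ i, c i • g' i) ∈ coneOf g := by
          apply combo_mem_coneOf g g' (fun i => (hgen_mem i).1) c hc0
        refine ⟨h1, ?_⟩
        show (0:ℝ) ≤ ⟪w, ∑ i, c i • g' i⟫
        rw [inner_sum_coneOf g' w c rfl]
        apply Finset.sum_nonneg
        intro i _
        exact mul_nonneg (hc0 i) (hgen_mem i).2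



lemma cone_alpha {ι : Type} [Fintype ι] (g : ι → F) (a b : F)
    (h1 : ∀ z ∈ coneOf g, 0 ≤ ⟪a, z⟫) (h2 : ∀ z ∈ coneOf g, 0 ≤ ⟪b, z⟫)
    (himp : ∀ z ∈ coneOf g, 0 < ⟪b, z⟫ → 0 < ⟪a, z⟫) :
    ∃ α : ℝ, 0 < α ∧ ∀ z ∈ coneOf g, α * ⟪b, z⟫ ≤ ⟪a, z⟫ := by
  classical
  set S := Finset.univ.filter (fun i : ι => 0 < ⟪b, g i⟫) with hS
  rcases S.eq_empty_or_nonempty with hSe | hSne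
  · refine ⟨1, one_pos, ?_⟩
    intro z hz
    obtain ⟨c, hc0, hcz⟩ := hz
    have hb : ⟪b, z⟫ ≤ 0 := by
      rw [inner_sum_coneOf g b c hcz]
      apply Finset.sum_nonpos
      intro i _
      have hni : ¬ 0 < ⟪b, g i⟫ := by
        intro h
        have : i ∈ S := by rw [hS, Finset.mem_filter]; exact ⟨Finset.mem_univ _, h⟩
        rw [hSe] at this
        simpa using this
      exact mul_nonpos_of_nonneg_of_nonpos (hc0 i) (by linarith)
    have := h1 z ⟨c, hc0, hcz⟩
    linarith
  · set α := S.inf' hSne (fun i => ⟪a, g i⟫ / ⟪b, g i⟫) with hα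
    have hαpos : 0 < α := by
      rw [hα, Finset.lt_inf'_iff]
      intro i hi
      rw [hS, Finset.mem_filter] at hi
      exact div_pos (himp (g i) (generator_mem_coneOf g i) hi.2) hi.2
    refine ⟨α, hαpos, ?_⟩
    intro z hz
    obtain ⟨c, hc0, hcz⟩ := hz
    rw [inner_sum_coneOf g a c hcz, inner_sum_coneOf g b c hcz, Finset.mul_sum]
    apply Finset.sum_le_sum
    intro i _
    have hgi := generator_mem_coneOf g i
    by_cases hbp : 0 < ⟪b, g i⟫
    · have hiS : i ∈ S := by rw [hS, Finset.mem_filter]; exact ⟨Finset.mem_univ _, hbp⟩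
      have hle : α ≤ ⟪a, g i⟫ / ⟪b, g i⟫ := Finset.inf'_le _ hiS
      have hmul : α * ⟪b, g i⟫ ≤ ⟪a, g i⟫ := (le_div_iff₀ hbp).mp hle
      nlinarith [mul_le_mul_of_nonneg_left hmul (hc0 i)]
    · have hbz : ⟪b, g i⟫ = 0 := le_antisymm (le_of_not_gt hbp) (h2 _ hgi)
      rw [hbz]
      have := mul_nonneg (hc0 i) (h1 _ hgi)
      nlinarith

end ConeAux

namespace Cells

open SfnAux ConeAux

variable {n : ℕ}

local notation "E" => EuclideanSpace ℝ (Fin n)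
local notation "F" => WithLp 2 (EuclideanSpace ℝ (Fin n) × EuclideanSpace ℝ (Fin n))

/-- embed a pair into the L2 product -/
def em (u v : E) : F := (WithLp.equiv 2 (E × E)).symm (u, v)

lemma inner_em (a b u v : E) : ⟪em a b, em u v⟫ = ⟪a, u⟫ + ⟪b, v⟫ := rfl

lemma sfn_eq_vertex {K : ConvexBody E} {s : Finset E} (hK : (K : Set E) = convexHull ℝ ↑s)
    {a u : E} (ha : a ∈ s) (hmax : ∀ a' ∈ s, ⟪a', u⟫ ≤ ⟪a, u⟫) : sfn K u = ⟪a, u⟫ := by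
  have hsne : s.Nonempty := ⟨a, ha⟩
  rw [sfn_finset_sup' hsne hK]
  apply le_antisymm
  · exact Finset.sup'_le _ _ hmax
  · exact Finset.le_sup' (fun b => ⟪b, u⟫) ha

/-- Main piecewise-linear comparison lemma: if the subadditivity defect of the polytope `P`
is positive only where that of the polytope `Q` is positive, then some positive multiple of
the former is dominated by the latter. -/
lemma exists_alpha (Q P : ConvexBody E) (hQ : IsPolytope Q) (hP : IsPolytope P)
    (himp : ∀ u v : E, 0 < sfn P u + sfn P v - sfn P (u + v) →
      0 < sfn Q u + sfn Q v - sfn Q (u + v)) :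
    ∃ α : ℝ, 0 < α ∧ ∀ u v : E,
      α * (sfn P u + sfn P v - sfn P (u + v)) ≤ sfn Q u + sfn Q v - sfn Q (u + v) := by
  classical
  obtain ⟨s, hs⟩ := hQ
  obtain ⟨t, ht⟩ := hP
  have hsne : s.Nonempty := Poly.finset_nonempty_of_polytope hs
  have htne : t.Nonempty := Poly.finset_nonempty_of_polytope ht
  -- the cell of a 6-tuple of vertices
  set L : E → E → E → E → E → E → List F := fun a b c d e f =>
    (s.toList.map fun a' => em (a - a') 0) ++ (s.toList.map fun b' => em 0 (b - b')) ++
    (s.toList.map fun c' => em (c - c') (c - c')) ++ (t.toList.map fun d' => em (d - d') 0) ++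
    (t.toList.map fun e' => em 0 (e - e')) ++ (t.toList.map fun f' => em (f - f') (f - f'))
    with hL
  -- membership in a cell in terms of maximization
  have hcell : ∀ a b c d e f u v : E,
      (em u v ∈ {z : F | ∀ w ∈ L a b c d e f, 0 ≤ ⟪w, z⟫}) ↔
      ((∀ a' ∈ s, ⟪a', u⟫ ≤ ⟪a, u⟫) ∧ (∀ b' ∈ s, ⟪b', v⟫ ≤ ⟪b, v⟫) ∧
       (∀ c' ∈ s, ⟪c', u + v⟫ ≤ ⟪c, u + v⟫) ∧ (∀ d' ∈ t, ⟪d', u⟫ ≤ ⟪d, u⟫) ∧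
       (∀ e' ∈ t, ⟪e', v⟫ ≤ ⟪e, v⟫) ∧ (∀ f' ∈ t, ⟪f', u + v⟫ ≤ ⟪f, u + v⟫)) := by
    intro a b c d e f u v
    simp only [Set.mem_setOf_eq, hL, List.mem_append, List.mem_map, Finset.mem_toList]
    constructor
    · intro h
      refine ⟨fun a' ha' => ?_, fun b' hb' => ?_, fun c' hc' => ?_,
        fun d' hd' => ?_, fun e' he' => ?_, fun f' hf' => ?_⟩
      · have := h (em (a - a') 0) (by exact Or.inl (Or.inl (Or.inl (Or.inl (Or.inl ⟨a', ha', rfl⟩)))))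
        rw [inner_em, inner_sub_left, inner_zero_left] at this
        linarith
      · have := h (em 0 (b - b')) (by exact Or.inl (Or.inl (Or.inl (Or.inl (Or.inr ⟨b', hb', rfl⟩)))))
        rw [inner_em, inner_sub_left, inner_zero_left] at this
        linarith
      · have := h (em (c - c') (c - c')) (by exact Or.inl (Or.inl (Or.inl (Or.inr ⟨c', hc', rfl⟩))))
        rw [inner_em, inner_sub_left, inner_sub_left] at this
        rw [inner_add_right, inner_add_right]
        linarith
      · have := h (em (d - d') 0) (by exact Or.inl (Or.inl (Or.inr ⟨d', hd', rfl⟩)))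
        rw [inner_em, inner_sub_left, inner_zero_left] at this
        linarith
      · have := h (em 0 (e - e')) (by exact Or.inl (Or.inr ⟨e', he', rfl⟩))
        rw [inner_em, inner_sub_left, inner_zero_left] at this
        linarith
      · have := h (em (f - f') (f - f')) (by exact Or.inr ⟨f', hf', rfl⟩)
        rw [inner_em, inner_sub_left, inner_sub_left] at this
        rw [inner_add_right, inner_add_right]
        linarith
    · rintro ⟨h1, h2, h3, h4, h5, h6⟩ w hw
      rcases hw with ((((hw | hw) | hw) | hw) | hw) | hw <;> obtain ⟨x, hx, rfl⟩ := hw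
      · rw [inner_em, inner_sub_left, inner_zero_left]
        linarith [h1 x hx]
      · rw [inner_em, inner_sub_left, inner_zero_left]
        linarith [h2 x hx]
      · rw [inner_em, inner_sub_left, inner_sub_left]
        have := h3 x hx
        rw [inner_add_right, inner_add_right] at this
        linarith
      · rw [inner_em, inner_sub_left, inner_zero_left]
        linarith [h4 x hx]
      · rw [inner_em, inner_sub_left, inner_zero_left]
        linarith [h5 x hx]
      · rw [inner_em, inner_sub_left, inner_sub_left]
        have := h6 x hx
        rw [inner_add_right, inner_add_right] at this
        linarith
  -- on each (nonempty-indexed) cell we obtain a positive ratio bound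
  have hcellalpha : ∀ a ∈ s, ∀ b ∈ s, ∀ c ∈ s, ∀ d ∈ t, ∀ e ∈ t, ∀ f ∈ t,
      ∃ α : ℝ, 0 < α ∧ ∀ u v : E, (em u v ∈ {z : F | ∀ w ∈ L a b c d e f, 0 ≤ ⟪w, z⟫}) →
        α * (sfn P u + sfn P v - sfn P (u + v)) ≤ sfn Q u + sfn Q v - sfn Q (u + v) := by
    intro a ha b hb c hc d hd e he f hf
    obtain ⟨ι, _, g, hg⟩ := mw (L a b c d e f)
    -- the two linear functionals on the cell
    have hvalQ : ∀ u v : E, (∀ w ∈ L a b c d e f, 0 ≤ ⟪w, em u v⟫) →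
        ⟪em (a - c) (b - c), em u v⟫ = sfn Q u + sfn Q v - sfn Q (u + v) := by
      intro u v hz
      obtain ⟨m1, m2, m3, _, _, _⟩ := (hcell a b c d e f u v).mp hz
      rw [inner_em, inner_sub_left, inner_sub_left]
      rw [sfn_eq_vertex hs ha m1, sfn_eq_vertex hs hb m2, sfn_eq_vertex hs hc m3]
      rw [inner_add_right]
      ring
    have hvalP : ∀ u v : E, (∀ w ∈ L a b c d e f, 0 ≤ ⟪w, em u v⟫) →
        ⟪em (d - f) (e - f), em u v⟫ = sfn P u + sfn P v - sfn P (u + v) := by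
      intro u v hz
      obtain ⟨_, _, _, m4, m5, m6⟩ := (hcell a b c d e f u v).mp hz
      rw [inner_em, inner_sub_left, inner_sub_left]
      rw [sfn_eq_vertex ht hd m4, sfn_eq_vertex ht he m5, sfn_eq_vertex ht hf m6]
      rw [inner_add_right]
      ring
    have hsurj : ∀ z : F, z = em ((WithLp.equiv 2 (E × E)) z).1 ((WithLp.equiv 2 (E × E)) z).2 := by
      intro z
      rfl
    have hQ1 : ∀ z ∈ coneOf g, 0 ≤ ⟪em (a - c) (b - c), z⟫ := by
      intro z hz
      rw [← hg] at hz
      rw [hsurj z] at hz ⊢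
      rw [hvalQ _ _ hz]
      linarith [sfn_subadd Q ((WithLp.equiv 2 (E × E)) z).1 ((WithLp.equiv 2 (E × E)) z).2]
    have hP1 : ∀ z ∈ coneOf g, 0 ≤ ⟪em (d - f) (e - f), z⟫ := by
      intro z hz
      rw [← hg] at hz
      rw [hsurj z] at hz ⊢
      rw [hvalP _ _ hz]
      linarith [sfn_subadd P ((WithLp.equiv 2 (E × E)) z).1 ((WithLp.equiv 2 (E × E)) z).2]
    have himp1 : ∀ z ∈ coneOf g, 0 < ⟪em (d - f) (e - f), z⟫ → 0 < ⟪em (a - c) (b - c), z⟫ := by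
      intro z hz hpos
      rw [← hg] at hz
      rw [hsurj z] at hz hpos ⊢
      rw [hvalP _ _ hz] at hpos
      rw [hvalQ _ _ hz]
      exact himp _ _ hpos
    obtain ⟨α, hα, hαle⟩ := cone_alpha g (em (a - c) (b - c)) (em (d - f) (e - f)) hQ1 hP1 himp1
    refine ⟨α, hα, ?_⟩
    intro u v hz
    have hz' : em u v ∈ coneOf g := by rw [← hg]; exact hz
    have := hαle (em u v) hz'
    rw [hvalQ u v hz, hvalP u v hz] at this
    exact this
  -- choose a uniform α over the finitely many cells
  set T : Finset (E × E × E × E × E × E) := s ×ˢ s ×ˢ s ×ˢ t ×ˢ t ×ˢ t with hT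
  have hTmem : ∀ τ : E × E × E × E × E × E, τ ∈ T ↔
      τ.1 ∈ s ∧ τ.2.1 ∈ s ∧ τ.2.2.1 ∈ s ∧ τ.2.2.2.1 ∈ t ∧ τ.2.2.2.2.1 ∈ t ∧ τ.2.2.2.2.2 ∈ t := by
    intro τ
    simp [hT, Finset.mem_product, and_assoc]
  have hTne : T.Nonempty := by
    obtain ⟨a, ha⟩ := hsne
    obtain ⟨d, hd⟩ := htne
    exact ⟨(a, a, a, d, d, d), (hTmem _).mpr ⟨ha, ha, ha, hd, hd, hd⟩⟩
  set A : E × E × E × E × E × E → ℝ := fun τ =>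
    if h : ∃ α : ℝ, 0 < α ∧ ∀ u v : E,
        (em u v ∈ {z : F | ∀ w ∈ L τ.1 τ.2.1 τ.2.2.1 τ.2.2.2.1 τ.2.2.2.2.1 τ.2.2.2.2.2, 0 ≤ ⟪w, z⟫}) →
        α * (sfn P u + sfn P v - sfn P (u + v)) ≤ sfn Q u + sfn Q v - sfn Q (u + v)
    then h.choose else 1 with hA
  have hApos : ∀ τ ∈ T, 0 < A τ := by
    intro τ hτ
    obtain ⟨h1, h2, h3, h4, h5, h6⟩ := (hTmem τ).mp hτ
    have hex := hcellalpha _ h1 _ h2 _ h3 _ h4 _ h5 _ h6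
    simp only [hA]
    rw [dif_pos hex]
    exact hex.choose_spec.1
  have hAprop : ∀ τ ∈ T, ∀ u v : E,
      (em u v ∈ {z : F | ∀ w ∈ L τ.1 τ.2.1 τ.2.2.1 τ.2.2.2.1 τ.2.2.2.2.1 τ.2.2.2.2.2, 0 ≤ ⟪w, z⟫}) →
      A τ * (sfn P u + sfn P v - sfn P (u + v)) ≤ sfn Q u + sfn Q v - sfn Q (u + v) := by
    intro τ hτ
    obtain ⟨h1, h2, h3, h4, h5, h6⟩ := (hTmem τ).mp hτ
    have hex := hcellalpha _ h1 _ h2 _ h3 _ h4 _ h5 _ h6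
    simp only [hA]
    rw [dif_pos hex]
    exact hex.choose_spec.2
  refine ⟨T.inf' hTne A, by rw [Finset.lt_inf'_iff]; exact hApos, ?_⟩
  intro u v
  -- find a cell containing (u,v)
  obtain ⟨a, ha, hamax⟩ := Finset.exists_max_image s (fun x => ⟪x, u⟫) hsne
  obtain ⟨b, hb, hbmax⟩ := Finset.exists_max_image s (fun x => ⟪x, v⟫) hsne
  obtain ⟨c, hc, hcmax⟩ := Finset.exists_max_image s (fun x => ⟪x, u + v⟫) hsne
  obtain ⟨d, hd, hdmax⟩ := Finset.exists_max_image t (fun x => ⟪x, u⟫) htne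
  obtain ⟨e, he, hemax⟩ := Finset.exists_max_image t (fun x => ⟪x, v⟫) htne
  obtain ⟨f, hf, hfmax⟩ := Finset.exists_max_image t (fun x => ⟪x, u + v⟫) htne
  set τ : E × E × E × E × E × E := (a, b, c, d, e, f) with hτ
  have hτT : τ ∈ T := (hTmem τ).mpr ⟨ha, hb, hc, hd, he, hf⟩
  have hmem : em u v ∈ {z : F | ∀ w ∈ L a b c d e f, 0 ≤ ⟪w, z⟫} :=
    (hcell a b c d e f u v).mpr ⟨hamax, hbmax, hcmax, hdmax, hemax, hfmax⟩
  have hbound := hAprop τ hτT u v hmem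
  have hinf : T.inf' hTne A ≤ A τ := Finset.inf'_le _ hτT
  have hdefP : 0 ≤ sfn P u + sfn P v - sfn P (u + v) := by linarith [sfn_subadd P u v]
  nlinarith [mul_le_mul_of_nonneg_right hinf hdefP]

end Cells

namespace Final

open SfnAux Poly Cells

lemma msupport_compl_null {X : Type*} [TopologicalSpace X] [SecondCountableTopology X]
    [MeasurableSpace X] (μ : Measure X) : μ (msupport μ)ᶜ = 0 := by
  have hset : (msupport μ)ᶜ = ⋃₀ {U : Set X | IsOpen U ∧ μ U = 0} := by
    ext x
    simp only [Set.mem_compl_iff, msupport, Set.mem_setOf_eq, Set.mem_sUnion]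
    push_neg
    constructor
    · rintro ⟨U, hU, hxU, hμU⟩
      exact ⟨U, ⟨hU, hμU⟩, hxU⟩
    · rintro ⟨U, ⟨hU, hμU⟩, hxU⟩
      exact ⟨U, hU, hxU, hμU⟩
  obtain ⟨T, hTc, hTsub, hTun⟩ := TopologicalSpace.isOpen_sUnion_countable
    {U : Set X | IsOpen U ∧ μ U = 0} (fun U hU => hU.1)
  rw [hset, ← hTun]
  exact (measure_sUnion_null_iff hTc).mpr (fun U hU => (hTsub hU).2)

variable {n : ℕ}

local notation "E" => EuclideanSpace ℝ (Fin n)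

lemma convexBody_secondCountable : SecondCountableTopology (ConvexBody E) := by
  have hiso : Isometry (fun K : ConvexBody E =>
      (⟨⟨(K : Set E), K.isCompact⟩, K.nonempty⟩ : TopologicalSpace.NonemptyCompacts E)) := by
    intro K L
    have h1 : edist (⟨⟨(K : Set E), K.isCompact⟩, K.nonempty⟩ :
        TopologicalSpace.NonemptyCompacts E)
        (⟨⟨(L : Set E), L.isCompact⟩, L.nonempty⟩ : TopologicalSpace.NonemptyCompacts E)
        = EMetric.hausdorffEdist (K : Set E) (L : Set E) := rfl
    rw [h1]
    exact ConvexBody.hausdorffEdist_coe K L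
  exact hiso.isEmbedding.secondCountableTopology

lemma sfn_continuous_in_body (u : E) : Continuous (fun K : ConvexBody E => sfn K u) := by
  apply LipschitzWith.continuous (K := ‖u‖₊)
  apply LipschitzWith.of_dist_le_mul
  intro K L
  rw [Real.dist_eq]
  calc |sfn K u - sfn L u| ≤ dist K L * ‖u‖ := abs_sfn_sub_le_dist K L u
    _ = ‖u‖₊ * dist K L := by rw [mul_comm, coe_nnnorm]

end Final

theorem support_of_generating_measure_scaled_summands {n : ℕ}
    [MeasurableSpace (ConvexBody (EuclideanSpace ℝ (Fin n)))]
    [BorelSpace (ConvexBody (EuclideanSpace ℝ (Fin n)))]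
    (μ : Measure (ConvexBody (EuclideanSpace ℝ (Fin n)))) [IsProbabilityMeasure μ]
    (hconc : μ (Polytopes n)ᶜ = 0)
    (hbd : Bornology.IsBounded (Polytopes n ∩ msupport μ))
    (Q : ConvexBody (EuclideanSpace ℝ (Fin n))) (hQpoly : IsPolytope Q)
    (hQ : ∀ u, sfn Q u = ∫ P, sfn P u ∂μ) :
    ∀ P ∈ Polytopes n ∩ msupport μ,
      ∃ (α : ℝ), 0 < α ∧ ∃ R : ConvexBody (EuclideanSpace ℝ (Fin n)), IsPolytope R ∧
        (Q : Set (EuclideanSpace ℝ (Fin n))) =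
          α • (P : Set (EuclideanSpace ℝ (Fin n))) + (R : Set (EuclideanSpace ℝ (Fin n))) := by
  classical
  set E := EuclideanSpace ℝ (Fin n)
  haveI : SecondCountableTopology (ConvexBody E) := Final.convexBody_secondCountable
  rintro P0 ⟨hP0poly, hP0supp⟩
  set G := Polytopes n ∩ msupport μ with hG
  -- almost every body is in the bounded set G
  have hGc : μ Gᶜ = 0 := by
    rw [hG, Set.compl_inter]
    exact measure_union_null hconc (Final.msupport_compl_null μ)
  have hae : ∀ᵐ P ∂μ, P ∈ G := by
    rw [MeasureTheory.ae_iff]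
    exact hGc
  -- uniform bound on bodies in G
  obtain ⟨r, hr⟩ := hbd.subset_closedBall (0 : ConvexBody E)
  have hKbound : ∀ K ∈ G, ∀ x ∈ K, ‖x‖ ≤ r := by
    intro K hK x hx
    have hd : dist K 0 ≤ r := by
      have := hr hK
      rwa [Metric.mem_closedBall] at this
    have h1 : Metric.infDist x ((0 : ConvexBody E) : Set E)
        ≤ Metric.hausdorffDist (K : Set E) ((0 : ConvexBody E) : Set E) :=
      Metric.infDist_le_hausdorffDist_of_mem hx ConvexBody.hausdorffEdist_ne_top
    have h2 : Metric.infDist x ((0 : ConvexBody E) : Set E) = ‖x‖ := by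
      rw [ConvexBody.coe_zero, ← Set.singleton_zero, Metric.infDist_singleton, dist_zero_right]
    have h3 : Metric.hausdorffDist (K : Set E) ((0 : ConvexBody E) : Set E) = dist K 0 :=
      ConvexBody.hausdorffDist_coe K 0
    rw [h2, h3] at h1
    linarith
  -- integrability of all support evaluations
  have hint : ∀ u : E, MeasureTheory.Integrable (fun P : ConvexBody E => sfn P u) μ := by
    intro u
    apply MeasureTheory.Integrable.mono' (MeasureTheory.integrable_const (r * ‖u‖))
      ((Final.sfn_continuous_in_body u).aestronglyMeasurable)
    filter_upwards [hae] with P hP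
    rw [Real.norm_eq_abs]
    exact SfnAux.abs_sfn_le (fun x hx => hKbound P hP x hx) u
  have hintd : ∀ u v : E, MeasureTheory.Integrable
      (fun P : ConvexBody E => sfn P u + sfn P v - sfn P (u + v)) μ :=
    fun u v => ((hint u).add (hint v)).sub (hint (u + v))
  have hdefQ : ∀ u v : E, sfn Q u + sfn Q v - sfn Q (u + v)
      = ∫ P, (sfn P u + sfn P v - sfn P (u + v)) ∂μ := by
    intro u v
    have hi1 : MeasureTheory.Integrable (fun P : ConvexBody E => sfn P u + sfn P v) μ :=
      (hint u).add (hint v)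
    rw [MeasureTheory.integral_sub hi1 (hint (u + v)),
      MeasureTheory.integral_add (hint u) (hint v), hQ u, hQ v, hQ (u + v)]
  -- the key positivity transfer
  have hkey : ∀ u v : E, 0 < sfn P0 u + sfn P0 v - sfn P0 (u + v) →
      0 < sfn Q u + sfn Q v - sfn Q (u + v) := by
    intro u v hpos
    set d0 := sfn P0 u + sfn P0 v - sfn P0 (u + v) with hd0
    set M := ‖u‖ + ‖v‖ + ‖u + v‖ + 1 with hM
    have hMpos : 0 < M := by positivity
    set ε := d0 / (2 * M) with hε
    have hεpos : 0 < ε := by positivity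
    set B := Metric.ball P0 ε with hB
    have hμB : μ B ≠ 0 := hP0supp B Metric.isOpen_ball (Metric.mem_ball_self hεpos)
    have hc : 0 < (μ B).toReal := ENNReal.toReal_pos hμB (measure_ne_top μ B)
    have hεM : ε * M = d0 / 2 := by
      rw [hε]
      field_simp
    have hlow : ∀ P ∈ B, d0 / 2 ≤ sfn P u + sfn P v - sfn P (u + v) := by
      intro P hPB
      have hdist : dist P P0 ≤ ε := (Metric.mem_ball.mp hPB).le
      have hb1 := abs_le.mp (SfnAux.abs_sfn_sub_le_dist P P0 u)
      have hb2 := abs_le.mp (SfnAux.abs_sfn_sub_le_dist P P0 v)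
      have hb3 := abs_le.mp (SfnAux.abs_sfn_sub_le_dist P P0 (u + v))
      have hm1 : dist P P0 * ‖u‖ ≤ ε * ‖u‖ :=
        mul_le_mul_of_nonneg_right hdist (norm_nonneg _)
      have hm2 : dist P P0 * ‖v‖ ≤ ε * ‖v‖ :=
        mul_le_mul_of_nonneg_right hdist (norm_nonneg _)
      have hm3 : dist P P0 * ‖u + v‖ ≤ ε * ‖u + v‖ :=
        mul_le_mul_of_nonneg_right hdist (norm_nonneg _)
      have hsum : ε * ‖u‖ + ε * ‖v‖ + ε * ‖u + v‖ = ε * M - ε := by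
        rw [hM]; ring
      nlinarith [hb1.1, hb1.2, hb2.1, hb2.2, hb3.1, hb3.2]
    have hmeasB : MeasurableSet B := Metric.isOpen_ball.measurableSet
    have hsplit := MeasureTheory.integral_add_compl hmeasB (hintd u v)
    have h2 : 0 ≤ ∫ P in Bᶜ, (sfn P u + sfn P v - sfn P (u + v)) ∂μ := by
      apply MeasureTheory.setIntegral_nonneg hmeasB.compl
      intro P _
      linarith [SfnAux.sfn_subadd P u v]
    have h3 : (μ B).toReal * (d0 / 2) ≤ ∫ P in B, (sfn P u + sfn P v - sfn P (u + v)) ∂μ := by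
      have := MeasureTheory.setIntegral_mono_on
        (MeasureTheory.integrableOn_const (measure_ne_top μ B))
        ((hintd u v).integrableOn) hmeasB hlow
      rwa [MeasureTheory.setIntegral_const, smul_eq_mul] at this
    rw [hdefQ u v, ← hsplit]
    have : 0 < (μ B).toReal * (d0 / 2) := by positivity
    linarith
  -- piecewise-linear domination
  obtain ⟨α, hαpos, hαle⟩ := Cells.exists_alpha Q P0 hQpoly hP0poly hkey
  set K := α • P0 with hK
  have hKdef : ∀ u v : E, sfn K u + sfn K v - sfn K (u + v)
      ≤ sfn Q u + sfn Q v - sfn Q (u + v) := by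
    intro u v
    rw [hK, SfnAux.sfn_smul P0 hαpos.le, SfnAux.sfn_smul P0 hαpos.le,
      SfnAux.sfn_smul P0 hαpos.le]
    have := hαle u v
    nlinarith
  obtain ⟨R, hQKR, _⟩ := SfnAux.exists_summand Q K hKdef
  have hRpoly : IsPolytope R := by
    apply Poly.isPolytope_summand hQpoly (R := K)
    rw [hQKR, add_comm]
  refine ⟨α, hαpos, R, hRpoly, ?_⟩
  rw [hQKR, ConvexBody.coe_add, hK, ConvexBody.coe_smul]
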